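/- Let k be a field of characteristic zero with absolute Galois group Γ_k, E an elliptic curve over k with full torsion Galois representation ρ: Γ_k → GL₂(ẑ) satisfying SL₂⁺(ẑ) ⊆ ρ(Γ_k). Let k^cyc be the field obtained by adjoining all roots of unity, and let K be any intermediate field k ⊆ K ⊆ k^cyc. Then SL₂⁺(ẑ) ⊆ ρ(Γ_K); in particular SL₂⁺(ℤ/n) ⊆ ρ_n(Γ_K) for every positive integer n. -/

import Mathlib

set_option synthInstance.maxHeartbeats 1000000
open Matrix

instance slSMul (n : ℕ) : SMul (SpecialLinearGroup (Fin 2) (ZMod n)) (Fin 2 → ZMod n) :=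
  ⟨fun g v => (g : Matrix (Fin 2) (Fin 2) (ZMod n)).mulVec v⟩

lemma slAct_def {n : ℕ} (g : SpecialLinearGroup (Fin 2) (ZMod n)) (v : Fin 2 → ZMod n) :
    g • v = (g : Matrix (Fin 2) (Fin 2) (ZMod n)).mulVec v := rfl

/-- The tautological action of `SL₂(ℤ/n)` on `(ℤ/n)²`. -/
instance slAct (n : ℕ) : DistribMulAction (SpecialLinearGroup (Fin 2) (ZMod n)) (Fin 2 → ZMod n) where
  one_smul v := by rw [slAct_def]; simp
  mul_smul g h v := by rw [slAct_def, slAct_def, slAct_def]; rw [Matrix.SpecialLinearGroup.coe_mul, Matrix.mulVec_mulVec]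
  smul_zero g := Matrix.mulVec_zero _
  smul_add g x y := Matrix.mulVec_add _ x y

/-- The action of `SL₂(ℤ/2)` on the three nonzero vectors of `(ℤ/2)²`. -/
instance nzAct : MulAction (SpecialLinearGroup (Fin 2) (ZMod 2)) {v : Fin 2 → ZMod 2 // v ≠ 0} where
  smul g v := ⟨g • (v : Fin 2 → ZMod 2), fun h => v.2 (by
    have := congrArg (fun w => g⁻¹ • w) h
    simpa [smul_smul] using this)⟩
  one_smul v := Subtype.ext (one_smul _ (v : Fin 2 → ZMod 2))
  mul_smul g h v := Subtype.ext (mul_smul g h (v : Fin 2 → ZMod 2))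

/-- The sign character of `SL₂(ℤ/2) ≅ S₃`, via the permutation action on
the three nonzero vectors of `(ℤ/2)²`. -/
noncomputable def signChar : SpecialLinearGroup (Fin 2) (ZMod 2) →* ℤˣ :=
  Equiv.Perm.sign.comp
    (MulAction.toPermHom (SpecialLinearGroup (Fin 2) (ZMod 2)) {v : Fin 2 → ZMod 2 // v ≠ 0})

/-- `SL₂⁺(ℤ/n)`: all of `SL₂(ℤ/n)` for odd `n`; for even `n` the kernel of the composition of
reduction mod 2 with the sign character `SL₂(ℤ/2) ≅ S₃ → {±1}`. -/
noncomputable def SL2Plus (n : ℕ) : Subgroup (SpecialLinearGroup (Fin 2) (ZMod n)) :=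
  if h : 2 ∣ n then
    (signChar.comp (SpecialLinearGroup.map (ZMod.castHom h (ZMod 2)))).ker
  else ⊤
set_option maxHeartbeats 1000000
open WeierstrassCurve WeierstrassCurve.Affine
open scoped Classical

/-- The `n`-torsion subgroup of an abelian group. -/
def torsionSub (A : Type*) [AddCommGroup A] (n : ℕ) : AddSubgroup A where
  carrier := {x | n • x = 0}
  zero_mem' := by simp
  add_mem' := by
    intro a b ha hb
    simp only [Set.mem_setOf_eq, smul_add] at *
    rw [ha, hb, add_zero]
  neg_mem' := by
    intro a ha
    simp only [Set.mem_setOf_eq, smul_neg] at *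
    rw [ha, neg_zero]

variable {k : Type*} [Field k] {K : Type*} [Field K] [Algebra k K]

/-- The action of a `k`-automorphism `σ` of `K` on the `K`-points of a Weierstrass curve `W`
defined over `k`. -/
noncomputable def galHom (W : WeierstrassCurve k) (σ : K ≃ₐ[k] K) : (W.baseChange K).toAffine.Point →+ (W.baseChange K).toAffine.Point :=
  WeierstrassCurve.Affine.Point.map (W' := W) σ.toAlgHom

/-- The Galois action preserves `n`-torsion. -/
noncomputable def torsionGal (W : WeierstrassCurve k) (σ : K ≃ₐ[k] K) (n : ℕ)
    (P : torsionSub ((W.baseChange K).toAffine.Point) n) : torsionSub ((W.baseChange K).toAffine.Point) n :=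
  ⟨galHom W σ P.1, by
    have h : n • (P : (W.baseChange K).toAffine.Point) = 0 := P.2
    show n • galHom W σ P.1 = 0
    rw [← map_nsmul, h, map_zero]⟩

/-- Dividing torsion levels: for `m ∣ n`, multiplication by `n/m` maps `n`-torsion to
`m`-torsion. -/
def torsionMul {A : Type*} [AddCommGroup A] {m n : ℕ} (h : m ∣ n) (P : torsionSub A n) :
    torsionSub A m :=
  ⟨(n / m) • P.1, by
    show m • (n / m) • (P : A) = 0
    rw [smul_smul, Nat.mul_div_cancel' h]
    exact P.2⟩

section Aux
open Matrix

lemma SLmap_map {I : Type*} [DecidableEq I] [Fintype I] {R S T : Type*} [CommRing R]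
    [CommRing S] [CommRing T] (f : S →+* T) (g : R →+* S) (M : SpecialLinearGroup I R) :
    SpecialLinearGroup.map f (SpecialLinearGroup.map g M) =
      SpecialLinearGroup.map (f.comp g) M := by
  apply Subtype.ext
  simp [Matrix.map_map]

def upperE {R : Type*} [CommRing R] (z : R) : SpecialLinearGroup (Fin 2) R :=
  ⟨!![1, z; 0, 1], by simp [Matrix.det_fin_two_of]⟩

def lowerE {R : Type*} [CommRing R] (z : R) : SpecialLinearGroup (Fin 2) R :=
  ⟨!![1, 0; z, 1], by simp [Matrix.det_fin_two_of]⟩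

lemma map_upperE {R S : Type*} [CommRing R] [CommRing S] (f : R →+* S) (z : R) :
    SpecialLinearGroup.map f (upperE z) = upperE (f z) := by
  apply Subtype.ext
  rw [Matrix.SpecialLinearGroup.map_apply_coe]
  ext i j
  fin_cases i <;> fin_cases j <;> simp [upperE]

lemma map_lowerE {R S : Type*} [CommRing R] [CommRing S] (f : R →+* S) (z : R) :
    SpecialLinearGroup.map f (lowerE z) = lowerE (f z) := by
  apply Subtype.ext
  rw [Matrix.SpecialLinearGroup.map_apply_coe]
  ext i j
  fin_cases i <;> fin_cases j <;> simp [lowerE]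

lemma exists_coprime_add_mul (a c n : ℕ) (hn : n ≠ 0) (h : Nat.Coprime (Nat.gcd a c) n) :
    ∃ x : ℕ, Nat.Coprime (c + x * a) n := by
  refine ⟨∏ p ∈ n.primeFactors.filter (fun p => ¬ p ∣ c), p, ?_⟩
  set x := ∏ p ∈ n.primeFactors.filter (fun p => ¬ p ∣ c), p with hx
  by_contra hne
  obtain ⟨p, pp, hpd⟩ := Nat.exists_prime_and_dvd hne
  have hp1 : p ∣ c + x * a := hpd.trans (Nat.gcd_dvd_left _ _)
  have hp2 : p ∣ n := hpd.trans (Nat.gcd_dvd_right _ _)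
  by_cases hpc : p ∣ c
  · have hxa : p ∣ x * a := by
      have := Nat.dvd_sub hp1 hpc
      simpa using this
    rcases (Nat.Prime.dvd_mul pp).mp hxa with hpx | hpa
    · obtain ⟨q, hq, hpq⟩ := (Prime.dvd_finset_prod_iff pp.prime _).mp hpx
      simp only [Finset.mem_filter, Nat.mem_primeFactors] at hq
      have : p = q := ((Nat.prime_dvd_prime_iff_eq pp hq.1.1).mp hpq)
      exact hq.2 (this ▸ hpc)
    · have : p ∣ Nat.gcd a c := Nat.dvd_gcd hpa hpc
      have : p ∣ Nat.gcd (Nat.gcd a c) n := Nat.dvd_gcd this hp2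
      rw [h] at this
      exact pp.one_lt.ne' (Nat.dvd_one.mp this)
  · have hpx : p ∣ x := by
      apply Finset.dvd_prod_of_mem
      simp [Nat.mem_primeFactors, pp, hp2, hn, hpc]
    have hpxa : p ∣ x * a := hpx.mul_right a
    have : p ∣ c := by
      have := Nat.dvd_sub hp1 hpxa
      simpa using this
    exact hpc this

lemma SL2_decomp {R : Type*} [CommRing R] (A : SpecialLinearGroup (Fin 2) R)
    (x v : R) (hv : (A.1 1 0 + x * A.1 0 0) * v = 1) :
    A = lowerE (-x) * (upperE (-((1 - A.1 0 0) * v)) * (lowerE (A.1 1 0 + x * A.1 0 0) *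
      upperE (A.1 0 1 + (1 - A.1 0 0) * v * (x * A.1 0 1 + A.1 1 1)))) := by
  have hdet : A.1 0 0 * A.1 1 1 - A.1 0 1 * A.1 1 0 = 1 := by
    have h2 := A.2
    rwa [Matrix.det_fin_two] at h2
  apply Subtype.ext
  simp only [Matrix.SpecialLinearGroup.coe_mul]; simp only [lowerE, upperE]
  ext i j
  set a := A.1 0 0 with ha
  set b := A.1 0 1 with hb
  set c := A.1 1 0 with hc
  set d := A.1 1 1 with hd
  fin_cases i <;> fin_cases j
  · simp [Matrix.mul_apply, Fin.sum_univ_two]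
    linear_combination (1 - a) * hv
  · simp [Matrix.mul_apply, Fin.sum_univ_two]
    linear_combination (-((1 - a) * v)) * hdet + ((1 - a)^2 * v * (x * b + d)) * hv
  · simp [Matrix.mul_apply, Fin.sum_univ_two]
    linear_combination (-(x * (1 - a))) * hv
  · simp [Matrix.mul_apply, Fin.sum_univ_two]
    linear_combination (1 + x * (1 - a) * v) * hdet +
      (-((1 - a) * (x * b + d) * (1 + x * (1 - a) * v))) * hv

lemma SL2_lift {N : ℕ} (hN : 0 < N) (A : SpecialLinearGroup (Fin 2) (ZMod N)) :
    ∃ M : SpecialLinearGroup (Fin 2) ℤ,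
      SpecialLinearGroup.map (Int.castRingHom (ZMod N)) M = A := by
  haveI : NeZero N := ⟨hN.ne'⟩
  have hdet : A.1 0 0 * A.1 1 1 - A.1 0 1 * A.1 1 0 = 1 := by
    have h2 := A.2
    rwa [Matrix.det_fin_two] at h2
  set a := A.1 0 0 with ha
  set b := A.1 0 1 with hb
  set c := A.1 1 0 with hc
  set d := A.1 1 1 with hd
  have hvalcast : ∀ z : ZMod N, ((z.val : ℤ) : ZMod N) = z := by
    intro z
    push_cast
    simp [ZMod.natCast_val, ZMod.cast_id]
  -- integer determinant congruence
  have hZ : (N : ℤ) ∣ ((a.val : ℤ) * d.val - (b.val : ℤ) * c.val - 1) := by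
    rw [← ZMod.intCast_zmod_eq_zero_iff_dvd]
    push_cast
    simp only [ZMod.natCast_val, ZMod.cast_id]
    rw [hdet]
    ring
  -- coprimality of gcd(a.val, c.val) with N
  have hcop : Nat.Coprime (Nat.gcd a.val c.val) N := by
    have hg1 : ((Nat.gcd (Nat.gcd a.val c.val) N : ℕ) : ℤ) ∣ 1 := by
      have d1 : ((Nat.gcd (Nat.gcd a.val c.val) N : ℕ) : ℤ) ∣
          ((a.val : ℤ) * d.val - (b.val : ℤ) * c.val - 1) :=
        dvd_trans (Int.natCast_dvd_natCast.mpr (Nat.gcd_dvd_right _ _)) hZ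
      have d2 : ((Nat.gcd (Nat.gcd a.val c.val) N : ℕ) : ℤ) ∣
          ((a.val : ℤ) * d.val - (b.val : ℤ) * c.val) := by
        apply dvd_sub
        · exact Dvd.dvd.mul_right (Int.natCast_dvd_natCast.mpr
            ((Nat.gcd_dvd_left _ _).trans (Nat.gcd_dvd_left _ _))) _
        · exact Dvd.dvd.mul_left (Int.natCast_dvd_natCast.mpr
            ((Nat.gcd_dvd_left _ _).trans (Nat.gcd_dvd_right _ _))) _
      have := dvd_sub d2 d1
      simpa using this
    have : Nat.gcd (Nat.gcd a.val c.val) N ∣ 1 := by exact_mod_cast hg1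
    exact Nat.dvd_one.mp this
  obtain ⟨x, hx⟩ := exists_coprime_add_mul a.val c.val N hN.ne' hcop
  have hu : IsUnit ((c.val + x * a.val : ℕ) : ZMod N) :=
    (ZMod.isUnit_iff_coprime _ N).mpr hx
  obtain ⟨U, hU⟩ := hu
  have huv : (c + (x : ZMod N) * a) * ((U⁻¹ : (ZMod N)ˣ) : ZMod N) = 1 := by
    have : ((c.val + x * a.val : ℕ) : ZMod N) = c + (x : ZMod N) * a := by
      push_cast
      simp [ZMod.natCast_val, ZMod.cast_id]
    rw [← this, ← hU]
    exact U.mul_inv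
  set v : ZMod N := ((U⁻¹ : (ZMod N)ˣ) : ZMod N) with hv
  have hA := SL2_decomp A (x : ZMod N) v huv
  refine ⟨lowerE (-(x : ℤ)) * (upperE (-(((1 - a) * v).val : ℤ)) *
    (lowerE (((c + (x : ZMod N) * a).val : ℤ)) *
      upperE (((b + (1 - a) * v * ((x : ZMod N) * b + d)).val : ℤ)))), ?_⟩
  rw [_root_.map_mul, _root_.map_mul, _root_.map_mul, map_lowerE, map_upperE, map_lowerE,
    map_upperE]
  rw [hA]
  simp only [Int.coe_castRingHom, Int.cast_neg, hvalcast]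
  push_cast
  simp [hvalcast]
  rfl

lemma SL2Plus_lift {n : ℕ} (hn : 0 < n) (A : SpecialLinearGroup (Fin 2) (ZMod n))
    (hA : A ∈ SL2Plus n) :
    ∃ M : SpecialLinearGroup (Fin 2) ℤ,
      SpecialLinearGroup.map (Int.castRingHom (ZMod n)) M = A ∧
      signChar (SpecialLinearGroup.map (Int.castRingHom (ZMod 2)) M) = 1 := by
  by_cases h2n : 2 ∣ n
  · obtain ⟨M, hM⟩ := SL2_lift hn A
    refine ⟨M, hM, ?_⟩
    have hcc : (ZMod.castHom h2n (ZMod 2)).comp (Int.castRingHom (ZMod n)) =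
        Int.castRingHom (ZMod 2) := RingHom.ext_int _ _
    have key : SpecialLinearGroup.map (Int.castRingHom (ZMod 2)) M =
        SpecialLinearGroup.map (ZMod.castHom h2n (ZMod 2)) A := by
      rw [← hM, SLmap_map, hcc]
    rw [key]
    rw [SL2Plus, dif_pos h2n] at hA
    exact hA
  · -- n odd : use CRT to combine A with the identity mod 2
    have hcop : Nat.Coprime 2 n := (Nat.Prime.coprime_iff_not_dvd Nat.prime_two).mpr h2n
    set r := ZMod.chineseRemainder hcop with hr
    set Y : Matrix (Fin 2) (Fin 2) (ZMod (2 * n)) :=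
      fun i j => r.symm ((1 : Matrix (Fin 2) (Fin 2) (ZMod 2)) i j, A.1 i j) with hY
    have hYr : ∀ i j, r (Y i j) = ((1 : Matrix (Fin 2) (Fin 2) (ZMod 2)) i j, A.1 i j) := by
      intro i j
      simp [hY]
    have hYdet : Y.det = 1 := by
      apply r.injective
      rw [_root_.map_one]
      have e1 : (r : ZMod (2*n) →+* (ZMod 2 × ZMod n)) Y.det =
          ((r : ZMod (2*n) →+* (ZMod 2 × ZMod n)).mapMatrix Y).det := RingHom.map_det _ Y
      have hfst : (RingHom.fst (ZMod 2) (ZMod n))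
          (((r : ZMod (2*n) →+* (ZMod 2 × ZMod n)).mapMatrix Y).det) = 1 := by
        rw [RingHom.map_det]
        have h1 : (RingHom.fst (ZMod 2) (ZMod n)).mapMatrix
            ((r : ZMod (2*n) →+* (ZMod 2 × ZMod n)).mapMatrix Y) = 1 := by
          ext i j
          simp only [RingHom.mapMatrix_apply, Matrix.map_apply]
          rw [show (r : ZMod (2*n) →+* (ZMod 2 × ZMod n)) (Y i j) = r (Y i j) from rfl, hYr]
          rfl
        rw [h1, Matrix.det_one]
      have hsnd : (RingHom.snd (ZMod 2) (ZMod n))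
          (((r : ZMod (2*n) →+* (ZMod 2 × ZMod n)).mapMatrix Y).det) = 1 := by
        rw [RingHom.map_det]
        have h1 : (RingHom.snd (ZMod 2) (ZMod n)).mapMatrix
            ((r : ZMod (2*n) →+* (ZMod 2 × ZMod n)).mapMatrix Y) = A.1 := by
          ext i j
          simp only [RingHom.mapMatrix_apply, Matrix.map_apply]
          rw [show (r : ZMod (2*n) →+* (ZMod 2 × ZMod n)) (Y i j) = r (Y i j) from rfl, hYr]
          rfl
        rw [h1, A.2]
      show (r : ZMod (2*n) →+* (ZMod 2 × ZMod n)) Y.det = 1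
      rw [e1]
      exact Prod.ext hfst hsnd
    set X : SpecialLinearGroup (Fin 2) (ZMod (2 * n)) := ⟨Y, hYdet⟩ with hX
    obtain ⟨M, hM⟩ := SL2_lift (by omega) X
    have hcomp : ∀ (m : ℕ) (h : m ∣ 2 * n),
        SpecialLinearGroup.map (Int.castRingHom (ZMod m)) M =
        SpecialLinearGroup.map (ZMod.castHom h (ZMod m)) X := by
      intro m h
      have hcc : (ZMod.castHom h (ZMod m)).comp (Int.castRingHom (ZMod (2 * n))) =
          Int.castRingHom (ZMod m) := RingHom.ext_int _ _
      rw [← hM, SLmap_map, hcc]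
    have hfst : (ZMod.castHom (Dvd.intro n rfl : (2:ℕ) ∣ 2 * n) (ZMod 2)) =
        (RingHom.fst (ZMod 2) (ZMod n)).comp (r : ZMod (2*n) →+* (ZMod 2 × ZMod n)) :=
      RingHom.ext_zmod _ _
    have hsnd : (ZMod.castHom (Dvd.intro_left 2 rfl : n ∣ 2 * n) (ZMod n)) =
        (RingHom.snd (ZMod 2) (ZMod n)).comp (r : ZMod (2*n) →+* (ZMod 2 × ZMod n)) :=
      RingHom.ext_zmod _ _
    refine ⟨M, ?_, ?_⟩
    · rw [hcomp n (Dvd.intro_left 2 rfl)]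
      apply Subtype.ext
      ext i j
      simp only [SpecialLinearGroup.map_apply_coe, RingHom.mapMatrix_apply, Matrix.map_apply]
      rw [hsnd]
      simp only [RingHom.coe_comp, Function.comp_apply]
      rw [show (r : ZMod (2*n) →+* (ZMod 2 × ZMod n)) ((X : Matrix _ _ _) i j) = r (Y i j)
        from rfl, hYr]
      rfl
    · rw [hcomp 2 (Dvd.intro n rfl)]
      have h1 : SpecialLinearGroup.map
          (ZMod.castHom (Dvd.intro n rfl : (2:ℕ) ∣ 2*n) (ZMod 2)) X = 1 := by
        apply Subtype.ext
        ext i j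
        simp only [SpecialLinearGroup.map_apply_coe, RingHom.mapMatrix_apply, Matrix.map_apply]
        rw [hfst]
        simp only [RingHom.coe_comp, Function.comp_apply]
        rw [show (r : ZMod (2*n) →+* (ZMod 2 × ZMod n)) ((X : Matrix _ _ _) i j) = r (Y i j)
          from rfl, hYr]
        rfl
      rw [h1]
      exact _root_.map_one _

/-- The fixed field of a single automorphism, as an intermediate field. -/
def fixedIF {k K : Type*} [Field k] [Field K] [Algebra k K] (γ : K ≃ₐ[k] K) :
    IntermediateField k K where
  carrier := {x | γ x = x}
  mul_mem' := fun {x y} hx hy => by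
    simp only [Set.mem_setOf_eq, _root_.map_mul] at *
    rw [hx, hy]
  one_mem' := map_one γ
  add_mem' := fun {x y} hx hy => by
    simp only [Set.mem_setOf_eq, map_add] at *
    rw [hx, hy]
  zero_mem' := map_zero γ
  algebraMap_mem' := γ.commutes
  inv_mem' := fun x hx => by
    simp only [Set.mem_setOf_eq, map_inv₀] at *
    rw [hx]

lemma mem_fixedIF {k K : Type*} [Field k] [Field K] [Algebra k K] (γ : K ≃ₐ[k] K)
    (x : K) : x ∈ fixedIF γ ↔ γ x = x := Iff.rfl

end Aux

open Matrix in
/-- let `E` be an elliptic curve over a field `k` of characteristic zero whose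
full torsion Galois representation `ρ : Γ_k → GL₂(ẑ)` (encoded by compatible bases `e n` of the
`n`-torsion of `E(k̄)`) has image containing `SL₂⁺(ẑ)` (encoded by: every compatible system of
elements of `SL₂⁺(ℤ/n)` is realised by some `γ ∈ Γ_k`), and suppose `det ∘ ρ` is the cyclotomic
character.  Then for any intermediate field `k ⊆ K ⊆ k^cyc` one has `SL₂⁺(ẑ) ⊆ ρ(Γ_K)`; in
particular `SL₂⁺(ℤ/n) ⊆ ρ_n(Γ_K)` for every `n > 0`. -/
theorem stmt_12 {k : Type*} [Field k] [CharZero k] (E : WeierstrassCurve k) (hΔ : E.Δ ≠ 0)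
    (e : ∀ n : ℕ, 0 < n → (torsionSub ((E.baseChange (AlgebraicClosure k)).toAffine.Point) n ≃+ (Fin 2 → ZMod n)))
    (hcompat : ∀ (m n : ℕ) (h : m ∣ n) (hm : 0 < m) (hn : 0 < n)
      (P : torsionSub ((E.baseChange (AlgebraicClosure k)).toAffine.Point) n),
        e m hm (torsionMul h P) = fun i => ZMod.castHom h (ZMod m) (e n hn P i))
    (hρ : ∀ A : ∀ n : ℕ, 0 < n → SpecialLinearGroup (Fin 2) (ZMod n),
      (∀ (m n : ℕ) (h : m ∣ n) (hm : 0 < m) (hn : 0 < n),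
        SpecialLinearGroup.map (ZMod.castHom h (ZMod m)) (A n hn) = A m hm) →
      (∀ (n : ℕ) (hn : 0 < n), A n hn ∈ SL2Plus n) →
      ∃ γ : AlgebraicClosure k ≃ₐ[k] AlgebraicClosure k,
        ∀ (n : ℕ) (hn : 0 < n) (P : torsionSub ((E.baseChange (AlgebraicClosure k)).toAffine.Point) n),
          e n hn (torsionGal E γ n P) = A n hn • e n hn P)
    (hdet : ∀ (γ : AlgebraicClosure k ≃ₐ[k] AlgebraicClosure k) (n : ℕ) (hn : 0 < n)
      (B : Matrix (Fin 2) (Fin 2) (ZMod n)),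
      (∀ P : torsionSub ((E.baseChange (AlgebraicClosure k)).toAffine.Point) n,
        e n hn (torsionGal E γ n P) = B.mulVec (e n hn P)) →
      ∀ ζ : AlgebraicClosure k, IsPrimitiveRoot ζ n → γ ζ = ζ ^ B.det.val)
    (K : IntermediateField k (AlgebraicClosure k))
    (hK : K ≤ IntermediateField.adjoin k
      {x : AlgebraicClosure k | ∃ n : ℕ, 0 < n ∧ x ^ n = 1}) :
    (∀ A : ∀ n : ℕ, 0 < n → SpecialLinearGroup (Fin 2) (ZMod n),
      (∀ (m n : ℕ) (h : m ∣ n) (hm : 0 < m) (hn : 0 < n),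
        SpecialLinearGroup.map (ZMod.castHom h (ZMod m)) (A n hn) = A m hm) →
      (∀ (n : ℕ) (hn : 0 < n), A n hn ∈ SL2Plus n) →
      ∃ γ ∈ K.fixingSubgroup,
        ∀ (n : ℕ) (hn : 0 < n) (P : torsionSub ((E.baseChange (AlgebraicClosure k)).toAffine.Point) n),
          e n hn (torsionGal E γ n P) = A n hn • e n hn P) ∧
    (∀ (n : ℕ) (hn : 0 < n), ∀ A ∈ SL2Plus n,
      ∃ γ ∈ K.fixingSubgroup,
        ∀ P : torsionSub ((E.baseChange (AlgebraicClosure k)).toAffine.Point) n,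
          e n hn (torsionGal E γ n P) = A • e n hn P) := by
  have part1 : (∀ A : ∀ n : ℕ, 0 < n → SpecialLinearGroup (Fin 2) (ZMod n),
      (∀ (m n : ℕ) (h : m ∣ n) (hm : 0 < m) (hn : 0 < n),
        SpecialLinearGroup.map (ZMod.castHom h (ZMod m)) (A n hn) = A m hm) →
      (∀ (n : ℕ) (hn : 0 < n), A n hn ∈ SL2Plus n) →
      ∃ γ ∈ K.fixingSubgroup,
        ∀ (n : ℕ) (hn : 0 < n) (P : torsionSub ((E.baseChange (AlgebraicClosure k)).toAffine.Point) n),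
          e n hn (torsionGal E γ n P) = A n hn • e n hn P) := by
    intro A hcompatA hplusA
    obtain ⟨γ, hγ⟩ := hρ A hcompatA hplusA
    refine ⟨γ, ?_, hγ⟩
    rw [IntermediateField.mem_fixingSubgroup_iff]
    intro x hxK
    have hx' := hK hxK
    have hle : IntermediateField.adjoin k
        {x : AlgebraicClosure k | ∃ n : ℕ, 0 < n ∧ x ^ n = 1} ≤ fixedIF γ := by
      rw [IntermediateField.adjoin_le_iff]
      rintro z ⟨m', hm', hz⟩
      rw [SetLike.mem_coe, mem_fixedIF]
      have hfin : IsOfFinOrder z := isOfFinOrder_iff_pow_eq_one.mpr ⟨m', hm', hz⟩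
      have hm0 : 0 < orderOf z := hfin.orderOf_pos
      have hprim : IsPrimitiveRoot z (orderOf z) := IsPrimitiveRoot.orderOf z
      have happ := hdet γ (orderOf z) hm0
        ((A (orderOf z) hm0 : Matrix (Fin 2) (Fin 2) (ZMod (orderOf z))))
        (fun P => (hγ (orderOf z) hm0 P).trans (slAct_def _ _)) z hprim
      rw [(A (orderOf z) hm0).2] at happ
      rcases eq_or_lt_of_le (Nat.one_le_iff_ne_zero.mpr hm0.ne') with h1 | h1
      · have hz1 : z = 1 := orderOf_eq_one_iff.mp h1.symm
        rw [hz1]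
        exact _root_.map_one γ
      · haveI : Fact (1 < orderOf z) := ⟨h1⟩
        rw [ZMod.val_one, pow_one] at happ
        exact happ
    exact hle hx'
  refine ⟨part1, ?_⟩
  intro n hn A hA
  obtain ⟨M, hMn, hM2⟩ := SL2Plus_lift hn A hA
  set B : ∀ m : ℕ, 0 < m → SpecialLinearGroup (Fin 2) (ZMod m) :=
    fun m _ => SpecialLinearGroup.map (Int.castRingHom (ZMod m)) M with hB
  have hBcompat : ∀ (m m' : ℕ) (h : m ∣ m') (hm : 0 < m) (hm' : 0 < m'),
      SpecialLinearGroup.map (ZMod.castHom h (ZMod m)) (B m' hm') = B m hm := by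
    intro m m' h hm hm'
    rw [hB]
    dsimp only
    rw [SLmap_map, (RingHom.ext_int ((ZMod.castHom h (ZMod m)).comp
      (Int.castRingHom (ZMod m'))) (Int.castRingHom (ZMod m)) : _)]
  have hBplus : ∀ (m : ℕ) (hm : 0 < m), B m hm ∈ SL2Plus m := by
    intro m hm
    rw [SL2Plus]
    by_cases h2 : 2 ∣ m
    · rw [dif_pos h2, MonoidHom.mem_ker, MonoidHom.comp_apply]
      rw [hB]
      dsimp only
      rw [SLmap_map, (RingHom.ext_int ((ZMod.castHom h2 (ZMod 2)).comp
        (Int.castRingHom (ZMod m))) (Int.castRingHom (ZMod 2)) : _)]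
      exact hM2
    · rw [dif_neg h2]
      exact Subgroup.mem_top _
  obtain ⟨γ, hγK, hγ⟩ := part1 B hBcompat hBplus
  refine ⟨γ, hγK, fun P => ?_⟩
  rw [hγ n hn P, show B n hn = A from hMn]
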